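/- Let I be a monomial ideal of k[x_1,...,x_n] generated by a regular sequence of monomials x^{A_1},...,x^{A_c}. Then every minimal monomial generator x^B of the integral closure Ī satisfies B ≼ A_1 + A_2 + ... + A_c componentwise; in particular, the LCM of all minimal generators of Ī divides x^{A_1 + ... + A_c}. -/

import Mathlib

open MvPolynomial

variable {k : Type} [Field k] {n : ℕ}

/-- An ideal of `k[x₁,…,xₙ]` is a *monomial ideal* if it is generated by monomials. -/
def IsMonomialIdeal (I : Ideal (MvPolynomial (Fin n) k)) : Prop :=
  ∃ G : Set (Fin n →₀ ℕ), I = Ideal.span ((fun A => (monomial A (1 : k))) '' G)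

/-- The integral closure of an ideal `I`, as a set: all elements `f` satisfying an
equation `f^r + a₁ f^{r-1} + ⋯ + a_r = 0` with `aᵢ ∈ Iⁱ`. -/
def intCl (I : Ideal (MvPolynomial (Fin n) k)) : Set (MvPolynomial (Fin n) k) :=
  {f | ∃ r : ℕ, 0 < r ∧ ∃ a : ℕ → MvPolynomial (Fin n) k,
    (∀ i, 1 ≤ i → i ≤ r → a i ∈ I ^ i) ∧
    f ^ r + ∑ i ∈ Finset.Icc 1 r, a i * f ^ (r - i) = 0}

/-- The exponent vectors of the minimal monomial generators of a set `T` of polynomials: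
those `A` with `x^A ∈ T` minimal in the componentwise (divisibility) order. -/
def minExps (T : Set (MvPolynomial (Fin n) k)) : Set (Fin n →₀ ℕ) :=
  {A | monomial A (1 : k) ∈ T ∧
    ∀ B : Fin n →₀ ℕ, monomial B (1 : k) ∈ T → B ≤ A → B = A}

lemma prod_monomial_one' {c : ℕ} (s : Finset (Fin c)) (f : Fin c → (Fin n →₀ ℕ)) :
    ∏ j ∈ s, monomial (f j) (1 : k) = monomial (∑ j ∈ s, f j) (1 : k) := by
  classical
  induction s using Finset.induction_on with
  | empty => simp [monomial_zero']
  | insert _ _ h ih =>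
    rw [Finset.prod_insert h, Finset.sum_insert h, ih, monomial_mul, one_mul]

lemma prod_monomial_one {c : ℕ} (f : Fin c → (Fin n →₀ ℕ)) :
    ∏ j, monomial (f j) (1 : k) = monomial (∑ j, f j) (1 : k) :=
  prod_monomial_one' Finset.univ f

lemma mem_pow_exists (c : ℕ) (A : Fin c → (Fin n →₀ ℕ))
    (I : Ideal (MvPolynomial (Fin n) k))
    (hI : I = Ideal.span (Set.range fun i => monomial (A i) (1 : k))) :
    ∀ r : ℕ, ∀ f ∈ I ^ r, ∀ E ∈ f.support,
      ∃ m : Fin c → ℕ, ∑ j, m j = r ∧ ∑ j, m j • A j ≤ E := by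
  intro r
  induction r with
  | zero =>
    intro f _ E _
    exact ⟨0, by simp, by simp⟩
  | succ r ih =>
    intro f hf
    rw [pow_succ] at hf
    refine Submodule.mul_induction_on hf ?_ ?_
    · intro a ha b hb E hE
      have hsub := MvPolynomial.support_mul a b hE
      rw [Finset.mem_add] at hsub
      obtain ⟨E1, hE1, E2, hE2, rfl⟩ := hsub
      obtain ⟨m, hm, hle⟩ := ih a ha E1 hE1
      have hI' : I = Ideal.span ((fun s => monomial s (1 : k)) '' Set.range A) := by
        rw [hI, ← Set.range_comp]; rfl
      rw [hI', MvPolynomial.mem_ideal_span_monomial_image] at hb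
      obtain ⟨si, ⟨j, rfl⟩, hsi⟩ := hb E2 hE2
      refine ⟨fun i => m i + if i = j then 1 else 0, ?_, ?_⟩
      · simp [Finset.sum_add_distrib, hm]
      · have : ∑ i, (fun i => m i + if i = j then 1 else 0) i • A i
            = (∑ i, m i • A i) + A j := by
          simp only [add_smul, Finset.sum_add_distrib, ite_smul, one_smul, zero_smul]
          rw [Finset.sum_ite_eq' Finset.univ j A]
          simp
        rw [this]
        exact add_le_add hle hsi
    · intro a b iha ihb E hE
      have := MvPolynomial.support_add hE
      rw [Finset.mem_union] at this
      rcases this with h | h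
      · exact iha E h
      · exact ihb E h

lemma monomial_mem_intCl (c : ℕ) (A : Fin c → (Fin n →₀ ℕ))
    (I : Ideal (MvPolynomial (Fin n) k))
    (hI : I = Ideal.span (Set.range fun i => monomial (A i) (1 : k)))
    (B : Fin n →₀ ℕ) (r : ℕ) (hr : 0 < r) (m : Fin c → ℕ)
    (hm : ∑ j, m j = r) (hle : ∑ j, m j • A j ≤ r • B) :
    (monomial B (1 : k)) ∈ intCl I := by
  have hgen : ∀ j, monomial (A j) (1 : k) ∈ I := by
    intro j
    rw [hI]
    exact Ideal.subset_span ⟨j, rfl⟩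
  have hpow : (monomial (r • B) (1 : k)) ∈ I ^ r := by
    have h1 : monomial (r • B) (1 : k)
        = monomial (r • B - ∑ j, m j • A j) (1 : k) *
          ∏ j, (monomial (A j) (1 : k)) ^ (m j) := by
      simp only [monomial_pow, one_pow]
      rw [prod_monomial_one, monomial_mul, one_mul]
      congr 1
      rw [tsub_add_cancel_of_le hle]
    rw [h1]
    apply Ideal.mul_mem_left
    have h2 : I ^ r = ∏ j, I ^ (m j) := by
      rw [Finset.prod_pow_eq_pow_sum, hm]
    rw [h2]
    exact Ideal.prod_mem_prod fun j _ => Ideal.pow_mem_pow (hgen j) (m j)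
  refine ⟨r, hr, fun i => if i = r then -(monomial B (1 : k)) ^ r else 0, ?_, ?_⟩
  · intro i h1 h2
    by_cases h : i = r
    · subst h
      simp only [if_pos rfl]
      refine neg_mem ?_
      rwa [monomial_pow, one_pow]
    · simp [h]
  · rw [Finset.sum_eq_single r]
    · simp
    · intro b _ hb; simp [hb]
    · intro h; exact absurd (Finset.mem_Icc.mpr ⟨hr, le_refl r⟩) h

lemma exists_of_monomial_mem_intCl (c : ℕ) (A : Fin c → (Fin n →₀ ℕ))
    (I : Ideal (MvPolynomial (Fin n) k))
    (hI : I = Ideal.span (Set.range fun i => monomial (A i) (1 : k)))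
    (B : Fin n →₀ ℕ) (hB : (monomial B (1 : k)) ∈ intCl I) :
    ∃ r : ℕ, 0 < r ∧ ∃ m : Fin c → ℕ, ∑ j, m j = r ∧ ∑ j, m j • A j ≤ r • B := by
  obtain ⟨r, hr, a, ha, heq⟩ := hB
  have hcoeff : MvPolynomial.coeff (r • B)
      ((monomial B (1 : k)) ^ r + ∑ i ∈ Finset.Icc 1 r, a i * (monomial B (1 : k)) ^ (r - i))
      = 0 := by rw [heq]; simp
  rw [MvPolynomial.coeff_add, monomial_pow, one_pow, MvPolynomial.coeff_monomial,
    if_pos rfl] at hcoeff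
  have hsum : MvPolynomial.coeff (r • B)
      (∑ i ∈ Finset.Icc 1 r, a i * (monomial B (1 : k)) ^ (r - i)) ≠ 0 := by
    intro h; rw [h] at hcoeff; simp at hcoeff
  rw [MvPolynomial.coeff_sum] at hsum
  obtain ⟨i, hi, hne⟩ := Finset.exists_ne_zero_of_sum_ne_zero hsum
  rw [Finset.mem_Icc] at hi
  rw [monomial_pow, one_pow, MvPolynomial.coeff_mul_monomial'] at hne
  have hble : (r - i) • B ≤ r • B := by
    intro t
    simp only [Finsupp.smul_apply, smul_eq_mul]
    exact Nat.mul_le_mul_right _ (Nat.sub_le r i)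
  rw [if_pos hble, mul_one] at hne
  have hkey : r • B - (r - i) • B = i • B := by
    have : r • B = (r - i) • B + i • B := by
      rw [← add_smul, Nat.sub_add_cancel hi.2]
    rw [this, add_tsub_cancel_left]
  rw [hkey] at hne
  have hsup : i • B ∈ (a i).support := MvPolynomial.mem_support_iff.mpr hne
  obtain ⟨m, hm, hle⟩ := mem_pow_exists c A I hI i (a i) (ha i hi.1 hi.2) _ hsup
  exact ⟨i, hi.1, m, hm, hle⟩

/-- If `I` is generated by a regular sequence of monomials
`x^{A 1}, …, x^{A c}` (equivalently, nonconstant pairwise coprime monomials), then every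
minimal monomial generator `x^B` of the integral closure satisfies `B ≼ A 1 + ⋯ + A c`
componentwise; in particular the LCM of the minimal generators of `Ī` divides
`x^{A 1 + ⋯ + A c}`. -/
theorem intCl_minExps_le_sum {c : ℕ} (A : Fin c → (Fin n →₀ ℕ))
    (hA0 : ∀ i, A i ≠ 0)
    (hcop : Pairwise fun i j => Disjoint (A i).support (A j).support)
    (I : Ideal (MvPolynomial (Fin n) k))
    (hI : I = Ideal.span (Set.range fun i => monomial (A i) (1 : k))) :
    ∀ B ∈ minExps (intCl I), B ≤ ∑ i, A i := by
  intro B hB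
  obtain ⟨hBmem, hmin⟩ := hB
  obtain ⟨r, hr, m, hm, hle⟩ := exists_of_monomial_mem_intCl c A I hI B hBmem
  intro t
  by_contra hcon
  push_neg at hcon
  have hS : (∑ i, A i) t < B t := hcon
  have hSsum : (∑ i, A i) t = ∑ i, (A i) t := by
    rw [Finsupp.finset_sum_apply]
  set B' : Fin n →₀ ℕ := B - Finsupp.single t 1 with hB'
  have hB't : B' t = B t - 1 := by
    rw [hB', Finsupp.tsub_apply, Finsupp.single_eq_same]
  have hB's : ∀ s, s ≠ t → B' s = B s := by
    intro s hs
    rw [hB', Finsupp.tsub_apply, Finsupp.single_eq_of_ne' (Ne.symm hs), Nat.sub_zero]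
  have hle' : ∑ j, m j • A j ≤ r • B' := by
    intro s
    by_cases hs : s = t
    · subst hs
      have h1 : ∀ j, (A j) s ≤ B s - 1 := by
        intro j
        have : (A j) s ≤ ∑ i, (A i) s :=
          Finset.single_le_sum (f := fun i => (A i) s) (fun i _ => Nat.zero_le _)
            (Finset.mem_univ j)
        omega
      calc (∑ j, m j • A j) s = ∑ j, m j * (A j) s := by
            rw [Finsupp.finset_sum_apply]
            simp [Finsupp.smul_apply]
        _ ≤ ∑ j, m j * (B s - 1) :=
            Finset.sum_le_sum fun j _ => Nat.mul_le_mul_left _ (h1 j)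
        _ = r * (B s - 1) := by rw [← Finset.sum_mul, hm]
        _ = (r • B') s := by rw [Finsupp.smul_apply, hB't]; rfl
    · have h := hle s
      simpa [Finsupp.smul_apply, hB's s hs] using h
  have hmem' : (monomial B' (1 : k)) ∈ intCl I :=
    monomial_mem_intCl c A I hI B' r hr m hm hle'
  have hB'le : B' ≤ B := by
    intro s
    rw [hB', Finsupp.tsub_apply]
    exact Nat.sub_le _ _
  have heq := hmin B' hmem' hB'le
  have h2 : B' t = B t := by rw [heq]
  rw [hB't] at h2
  omega
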